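/- Let P be a field and X a class of commutative P-algebras given as a family A : κ → Type. Then X is logically compact if and only if for every n : ℕ, the union of every nonempty directed (under inclusion) family of X-closed ideals of MvPolynomial (Fin n) P is again an X-closed ideal. -/

import Mathlib

open MvPolynomial

universe u v w x

/-- An ideal `I` of the free commutative `P`-algebra of rank `n` is `X`-closed
(for the class `X` given by the family `A`) if the quotient algebra embeds into
a product of members of the family. -/
def IsXClosed (P : Type u) [Field P] {κ : Type v} (A : κ → Type w)
    [∀ k, CommRing (A k)] [∀ k, Algebra P (A k)]
    {n : ℕ} (I : Ideal (MvPolynomial (Fin n) P)) : Prop :=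
  ∃ (J : Type (max u v w)) (k : J → κ)
    (g : (MvPolynomial (Fin n) P ⧸ I) →ₐ[P] ((j : J) → A (k j))),
    Function.Injective g

/-- The class `X` given by the family `A` is logically compact: every infinitary
quasiidentity holding in all members of the class reduces to a finitary one. -/
def LogicallyCompact (P : Type u) [Field P] {κ : Type v} (A : κ → Type w)
    [∀ k, CommRing (A k)] [∀ k, Algebra P (A k)] : Prop :=
  ∀ (n : ℕ) (T : Set (MvPolynomial (Fin n) P)) (f : MvPolynomial (Fin n) P),
    (∀ (k : κ) (μ : Fin n → A k),
        (∀ g ∈ T, aeval μ g = 0) → aeval μ f = 0) →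
    ∃ T₀ : Finset (MvPolynomial (Fin n) P), ↑T₀ ⊆ T ∧
      ∀ (k : κ) (μ : Fin n → A k),
        (∀ g ∈ T₀, aeval μ g = 0) → aeval μ f = 0

section Aux
variable (P : Type u) [Field P] {κ : Type v} (A : κ → Type w)
  [∀ k, CommRing (A k)] [∀ k, Algebra P (A k)] {n : ℕ}

/-- The `X`-closure of an ideal: all polynomials killed by every evaluation
into a member of the class that kills `I`. -/
noncomputable def xCl (I : Ideal (MvPolynomial (Fin n) P)) : Ideal (MvPolynomial (Fin n) P) :=
  ⨅ (k : κ) (μ : Fin n → A k) (_ : ∀ g ∈ I, aeval μ g = 0),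
    RingHom.ker (aeval μ : MvPolynomial (Fin n) P →ₐ[P] A k)

theorem mem_xCl {I : Ideal (MvPolynomial (Fin n) P)} {f : MvPolynomial (Fin n) P} :
    f ∈ xCl P A I ↔
      ∀ (k : κ) (μ : Fin n → A k), (∀ g ∈ I, aeval μ g = 0) → aeval μ f = 0 := by
  simp [xCl, Submodule.mem_iInf, RingHom.mem_ker]

theorem le_xCl (I : Ideal (MvPolynomial (Fin n) P)) : I ≤ xCl P A I :=
  fun f hf => (mem_xCl P A).mpr fun k μ h => h f hf

theorem xCl_mono {I J : Ideal (MvPolynomial (Fin n) P)} (h : I ≤ J) :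
    xCl P A I ≤ xCl P A J := fun f hf =>
  (mem_xCl P A).mpr fun k μ hμ => (mem_xCl P A).mp hf k μ (fun g hg => hμ g (h hg))

theorem xCl_xCl (I : Ideal (MvPolynomial (Fin n) P)) :
    xCl P A (xCl P A I) = xCl P A I :=
  le_antisymm
    (fun f hf => (mem_xCl P A).mpr fun k μ hμ =>
      (mem_xCl P A).mp hf k μ (fun g hg => (mem_xCl P A).mp hg k μ hμ))
    (le_xCl P A _)

theorem isXClosed_iff_xCl_eq {I : Ideal (MvPolynomial (Fin n) P)} :
    IsXClosed P A I ↔ xCl P A I = I := by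
  constructor
  · rintro ⟨J, k, g, hg⟩
    refine le_antisymm (fun f hf => ?_) (le_xCl P A I)
    have key : ∀ j : J, ∀ p : MvPolynomial (Fin n) P,
        aeval (fun i => g (Ideal.Quotient.mkₐ P I (X i)) j) p
          = g (Ideal.Quotient.mkₐ P I p) j := by
      intro j p
      have h := MvPolynomial.aeval_unique
        ((Pi.evalAlgHom P (fun j => A (k j)) j).comp (g.comp (Ideal.Quotient.mkₐ P I)))
      calc aeval (fun i => g (Ideal.Quotient.mkₐ P I (X i)) j) p
          = ((Pi.evalAlgHom P (fun j => A (k j)) j).comp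
              (g.comp (Ideal.Quotient.mkₐ P I))) p := by rw [h]; rfl
        _ = g (Ideal.Quotient.mkₐ P I p) j := rfl
    have hz : ∀ j, g (Ideal.Quotient.mkₐ P I f) j = 0 := by
      intro j
      rw [← key j f]
      refine (mem_xCl P A).mp hf (k j) _ fun g' hg' => ?_
      rw [key j g']
      have : Ideal.Quotient.mkₐ P I g' = 0 := by
        rw [Ideal.Quotient.mkₐ_eq_mk]
        exact (Ideal.Quotient.eq_zero_iff_mem).mpr hg'
      rw [this, map_zero]; rfl
    have : g (Ideal.Quotient.mkₐ P I f) = 0 := funext hz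
    have h2 : Ideal.Quotient.mkₐ P I f = 0 := hg (by rw [this, map_zero])
    rw [Ideal.Quotient.mkₐ_eq_mk] at h2
    exact (Ideal.Quotient.eq_zero_iff_mem).mp h2
  · intro hcl
    refine ⟨ULift.{max u v} (Σ k : κ, {μ : Fin n → A k // ∀ g ∈ I, aeval μ g = 0}),
      fun j => j.down.1, ?_, ?_⟩
    · refine Ideal.Quotient.liftₐ I (Pi.algHom P _ fun j => aeval j.down.2.1) ?_
      intro a ha
      funext j
      exact j.down.2.2 a ha
    · rw [injective_iff_map_eq_zero]
      intro x hx
      obtain ⟨r, rfl⟩ := Ideal.Quotient.mk_surjective x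
      have : r ∈ I := by
        rw [← hcl, mem_xCl]
        intro k μ hμ
        have := congrFun hx (ULift.up ⟨k, μ, hμ⟩)
        exact this
      exact (Ideal.Quotient.eq_zero_iff_mem).mpr this

theorem quasi_iff_mem_xCl {T : Set (MvPolynomial (Fin n) P)} {f : MvPolynomial (Fin n) P} :
    (∀ (k : κ) (μ : Fin n → A k), (∀ g ∈ T, aeval μ g = 0) → aeval μ f = 0)
      ↔ f ∈ xCl P A (Ideal.span T) := by
  rw [mem_xCl]
  constructor
  · intro h k μ hμ
    exact h k μ fun g hg => hμ g (Ideal.subset_span hg)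
  · intro h k μ hμ
    refine h k μ fun g hg => ?_
    have hker : Ideal.span T ≤ RingHom.ker (aeval μ : MvPolynomial (Fin n) P →ₐ[P] A k) :=
      Ideal.span_le.mpr fun g' hg' => hμ g' hg'
    exact hker hg
end Aux

/-- `X` is logically compact iff for every `n` the union of every
nonempty directed family of `X`-closed ideals of `MvPolynomial (Fin n) P` is
again an `X`-closed ideal. -/
theorem logicallyCompact_iff_directed_union_closed (P : Type u) [Field P]
    {κ : Type v} (A : κ → Type w)
    [∀ k, CommRing (A k)] [∀ k, Algebra P (A k)] :
    LogicallyCompact P A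
      ↔
    (∀ (n : ℕ) {ι : Type u} [Nonempty ι]
        (I : ι → Ideal (MvPolynomial (Fin n) P)),
        Directed (· ≤ ·) I → (∀ i, IsXClosed P A (I i)) →
        ∃ I' : Ideal (MvPolynomial (Fin n) P),
          (I' : Set (MvPolynomial (Fin n) P)) = ⋃ i, ↑(I i) ∧
          IsXClosed P A I') := by
  constructor
  · intro hc n ι _ I hdir hcl
    classical
    refine ⟨⨆ i, I i, Submodule.coe_iSup_of_directed I hdir, ?_⟩
    rw [isXClosed_iff_xCl_eq]
    refine le_antisymm (fun f hf => ?_) (le_xCl P A _)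
    have hq : ∀ (k : κ) (μ : Fin n → A k),
        (∀ g ∈ ((⨆ i, I i : Ideal (MvPolynomial (Fin n) P)) : Set (MvPolynomial (Fin n) P)), aeval μ g = 0) →
          aeval μ f = 0 := by
      refine (quasi_iff_mem_xCl P A
        (T := ((⨆ i, I i : Ideal (MvPolynomial (Fin n) P)) :
          Set (MvPolynomial (Fin n) P)))).mpr ?_
      rw [Ideal.span_eq]
      exact hf
    obtain ⟨T₀, hT₀sub, hT₀⟩ := hc n _ f hq
    have hfin : ∀ (s : Finset (MvPolynomial (Fin n) P)),
        (↑s : Set (MvPolynomial (Fin n) P)) ⊆ ↑(⨆ i, I i) → ∃ i, ∀ g ∈ s, g ∈ I i := by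
      intro s
      induction s using Finset.induction_on with
      | empty => exact fun _ => ⟨Classical.arbitrary ι, by simp⟩
      | @insert a s ha ih =>
        intro hsub
        obtain ⟨i, hi⟩ := ih fun g hg =>
          hsub (Finset.mem_coe.mpr (Finset.mem_insert_of_mem (Finset.mem_coe.mp hg)))
        obtain ⟨j, hj⟩ := (Submodule.mem_iSup_of_directed I hdir).mp
          (hsub (Finset.mem_coe.mpr (Finset.mem_insert_self a s)))
        obtain ⟨z, hz1, hz2⟩ := hdir j i
        refine ⟨z, fun g hg => ?_⟩
        rcases Finset.mem_insert.mp hg with rfl | hg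
        · exact hz1 hj
        · exact hz2 (hi g hg)
    obtain ⟨z, hz⟩ := hfin T₀ hT₀sub
    have hT₀z : (↑T₀ : Set (MvPolynomial (Fin n) P)) ⊆ I z := fun g hg =>
      hz g (Finset.mem_coe.mp hg)
    have hfz : f ∈ I z := by
      have h1 : f ∈ xCl P A (Ideal.span (↑T₀ : Set (MvPolynomial (Fin n) P))) :=
        (quasi_iff_mem_xCl P A).mp hT₀
      have h2 : xCl P A (Ideal.span (↑T₀ : Set (MvPolynomial (Fin n) P))) ≤ I z := by
        rw [← (isXClosed_iff_xCl_eq P A).mp (hcl z)]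
        exact xCl_mono P A (Ideal.span_le.mpr hT₀z)
      exact h2 h1
    exact le_iSup I z hfz
  · intro h n T f hq
    classical
    let ι : Type u := {s : Finset (MvPolynomial (Fin n) P) // ↑s ⊆ T}
    haveI : Nonempty ι := ⟨⟨∅, by simp⟩⟩
    let Ifam : ι → Ideal (MvPolynomial (Fin n) P) := fun s =>
      xCl P A (Ideal.span (↑s.1 : Set (MvPolynomial (Fin n) P)))
    have hdir : Directed (· ≤ ·) Ifam := by
      intro s t
      refine ⟨⟨s.1 ∪ t.1, ?_⟩, ?_, ?_⟩
      · rw [Finset.coe_union]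
        exact Set.union_subset s.2 t.2
      · exact xCl_mono P A (Ideal.span_mono (by rw [Finset.coe_union]; exact
          Set.subset_union_left))
      · exact xCl_mono P A (Ideal.span_mono (by rw [Finset.coe_union]; exact
          Set.subset_union_right))
    obtain ⟨I', hI'coe, hI'closed⟩ := h n Ifam hdir
      (fun s => (isXClosed_iff_xCl_eq P A).mpr (xCl_xCl P A _))
    have hclosed : xCl P A I' = I' := (isXClosed_iff_xCl_eq P A).mp hI'closed
    have hTsub : T ⊆ (I' : Set (MvPolynomial (Fin n) P)) := by
      intro g hg
      rw [hI'coe]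
      refine Set.mem_iUnion.mpr ⟨⟨{g}, by simpa using hg⟩, ?_⟩
      exact le_xCl P A _ (Ideal.subset_span (by simp))
    have hf : f ∈ I' := by
      have h1 : f ∈ xCl P A (Ideal.span T) := (quasi_iff_mem_xCl P A).mp hq
      have h2 : Ideal.span T ≤ I' := Ideal.span_le.mpr hTsub
      rw [← hclosed]
      exact xCl_mono P A h2 h1
    have hf' : f ∈ ⋃ i, ((Ifam i : Ideal (MvPolynomial (Fin n) P)) :
        Set (MvPolynomial (Fin n) P)) := hI'coe ▸ hf
    obtain ⟨s, hs⟩ := Set.mem_iUnion.mp hf'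
    exact ⟨s.1, s.2, (quasi_iff_mem_xCl P A).mpr hs⟩
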